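/- For fixed a ∈ (0, 1/2], the function f₁(r) = ((2a-1)/(1-a))·(1-r²)·𝒦ₐ(r) + 2·ℰₐ(r) is strictly decreasing on (0,1), where 𝒦ₐ(r) = (π/2)·₂F₁(a, 1-a; 1; r²) and ℰₐ(r) = (π/2)·₂F₁(a-1, 1-a; 1; r²). -/

import Mathlib

open Real Filter Set Topology

/-- Pochhammer symbol (rising factorial) for real `x`. -/
noncomputable def poch (x : ℝ) (n : ℕ) : ℝ := (ascPochhammer ℝ n).eval x

/-- Generalized complete elliptic integral of the first kind. -/
noncomputable def Ka (a r : ℝ) : ℝ :=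
  (π / 2) * ∑' n : ℕ, (poch a n * poch (1 - a) n / (n.factorial : ℝ) ^ 2) * r ^ (2 * n)

/-- Generalized complete elliptic integral of the second kind. -/
noncomputable def Ea (a r : ℝ) : ℝ :=
  (π / 2) * ∑' n : ℕ, (poch (a - 1) n * poch (1 - a) n / (n.factorial : ℝ) ^ 2) * r ^ (2 * n)

/-- Generalized Grötzsch ring function. -/
noncomputable def muG (a r : ℝ) : ℝ :=
  π / (2 * Real.sin (π * a)) * (Ka a (Real.sqrt (1 - r ^ 2)) / Ka a r)

/-- Generalized Hersch–Pfluger distortion function. -/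
noncomputable def phiHP (a K r : ℝ) : ℝ := Function.invFun (muG a) (muG a r / K)

/-- The function mₐ(r). -/
noncomputable def mA (a r : ℝ) : ℝ :=
  2 / (π * Real.sin (π * a)) * (1 - r ^ 2) * Ka a (Real.sqrt (1 - r ^ 2)) * Ka a r

/-- Digamma function (as the logarithmic derivative of Γ). -/
noncomputable def psiDG (x : ℝ) : ℝ := deriv (fun t => Real.log (Real.Gamma t)) x

/-- Ramanujan constant R(a). -/
noncomputable def RamanujanR (a : ℝ) : ℝ :=
  -2 * Real.eulerMascheroniConstant - psiDG a - psiDG (1 - a)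

/-! ### Auxiliary material -/

namespace F1Aux

lemma poch_zero (x : ℝ) : poch x 0 = 1 := by simp [poch]

lemma poch_succ (x : ℝ) (n : ℕ) : poch x (n + 1) = poch x n * (x + n) := by
  simp [poch, ascPochhammer_succ_right]

lemma poch_succ_left (x : ℝ) (n : ℕ) : poch x (n + 1) = x * poch (x + 1) n := by
  simp [poch, ascPochhammer_succ_left, Polynomial.eval_comp]

lemma poch_pos {x : ℝ} (hx : 0 < x) (n : ℕ) : 0 < poch x n :=
  ascPochhammer_pos n x hx

lemma poch_le_factorial {x : ℝ} (hx0 : 0 < x) (hx1 : x ≤ 1) (n : ℕ) :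
    poch x n ≤ (n.factorial : ℝ) := by
  induction n with
  | zero => simp [poch_zero]
  | succ n ih =>
    rw [poch_succ, Nat.factorial_succ]
    push_cast
    have h1 : poch x n * (x + n) ≤ (n.factorial : ℝ) * (x + n) := by
      apply mul_le_mul_of_nonneg_right ih
      positivity
    have h2 : (n.factorial : ℝ) * (x + n) ≤ (n.factorial : ℝ) * (n + 1) := by
      apply mul_le_mul_of_nonneg_left (by linarith) (by positivity)
    calc poch x n * (x + n) ≤ (n.factorial : ℝ) * (x + n) := h1
      _ ≤ (n.factorial : ℝ) * (n + 1) := h2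
      _ = ((n : ℝ) + 1) * n.factorial := by ring

/-- coefficients of `Ka`. -/
noncomputable def cA (a : ℝ) (n : ℕ) : ℝ :=
  poch a n * poch (1 - a) n / (n.factorial : ℝ) ^ 2

/-- coefficients of `Ea`. -/
noncomputable def cB (a : ℝ) (n : ℕ) : ℝ :=
  poch (a - 1) n * poch (1 - a) n / (n.factorial : ℝ) ^ 2

/-- higher coefficients of `f₁`. -/
noncomputable def cD (a : ℝ) (n : ℕ) : ℝ :=
  (2 * a - 1) / (1 - a) * cA a (n + 1) - (2 * a - 1) / (1 - a) * cA a n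
    + 2 * cB a (n + 1)

section bounds

variable {a : ℝ} (ha0 : 0 < a) (ha1 : a ≤ 1 / 2)

include ha0 ha1

lemma cA_pos (n : ℕ) : 0 < cA a n := by
  have := poch_pos ha0 n
  have := poch_pos (x := 1 - a) (by linarith) n
  have : (0:ℝ) < (n.factorial : ℝ) := by positivity
  unfold cA; positivity

lemma abs_cA_le_one (n : ℕ) : |cA a n| ≤ 1 := by
  have hA := cA_pos ha0 ha1 n
  rw [abs_of_pos hA]
  unfold cA
  rw [div_le_one (by positivity)]
  have h1 := poch_le_factorial ha0 (by linarith) n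
  have h2 := poch_le_factorial (x := 1 - a) (by linarith) (by linarith) n
  have p1 := (poch_pos ha0 n).le
  have p2 := (poch_pos (x := 1 - a) (by linarith) n).le
  calc poch a n * poch (1 - a) n ≤ (n.factorial : ℝ) * (n.factorial : ℝ) :=
        mul_le_mul h1 h2 p2 (by positivity)
    _ = (n.factorial : ℝ) ^ 2 := by ring

lemma abs_poch_sub_one_le (n : ℕ) : |poch (a - 1) n| ≤ (n.factorial : ℝ) := by
  cases n with
  | zero => simp [poch_zero]
  | succ n =>
    rw [poch_succ_left]
    have : a - 1 + 1 = a := by ring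
    rw [this, abs_mul, abs_of_pos (poch_pos ha0 n)]
    have h1 : |a - 1| ≤ 1 := by rw [abs_le]; constructor <;> linarith
    have h2 := poch_le_factorial ha0 (by linarith) n
    have h3 : (n.factorial : ℝ) ≤ ((n+1).factorial : ℝ) := by
      exact_mod_cast Nat.factorial_le (Nat.le_succ n)
    calc |a - 1| * poch a n ≤ 1 * (n.factorial : ℝ) :=
          mul_le_mul h1 h2 (poch_pos ha0 n).le zero_le_one
      _ ≤ ((n+1).factorial : ℝ) := by rw [one_mul]; exact h3

lemma abs_cB_le_one (n : ℕ) : |cB a n| ≤ 1 := by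
  unfold cB
  rw [abs_div, abs_mul]
  have hfp : (0:ℝ) < (n.factorial : ℝ) ^ 2 := by positivity
  rw [abs_of_pos hfp, div_le_one hfp]
  have h1 := abs_poch_sub_one_le ha0 ha1 n
  have h2 : |poch (1 - a) n| ≤ (n.factorial : ℝ) := by
    rw [abs_of_pos (poch_pos (x := 1 - a) (by linarith) n)]
    exact poch_le_factorial (by linarith) (by linarith) n
  calc |poch (a - 1) n| * |poch (1 - a) n| ≤ (n.factorial : ℝ) * (n.factorial : ℝ) :=
        mul_le_mul h1 h2 (abs_nonneg _) (by positivity)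
    _ = (n.factorial : ℝ) ^ 2 := by ring

end bounds

lemma summable_aux {r : ℝ} (hr : |r| < 1) {C : ℕ → ℝ} (hC : ∀ n, |C n| ≤ 1) :
    Summable (fun n => C n * r ^ (2 * n)) := by
  apply Summable.of_norm_bounded (g := fun n => (r ^ 2) ^ n)
  · exact summable_geometric_of_lt_one (by positivity)
      (by nlinarith [abs_nonneg r, sq_abs r])
  · intro n
    rw [Real.norm_eq_abs, abs_mul, pow_mul]
    have : |r ^ 2| = r ^ 2 := abs_of_nonneg (by positivity)
    calc |C n| * |(r ^ 2) ^ n| ≤ 1 * |(r ^ 2) ^ n| :=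
          mul_le_mul_of_nonneg_right (hC n) (abs_nonneg _)
      _ = (r ^ 2) ^ n := by rw [one_mul, abs_pow, this]

/-- Negativity of the higher coefficients. -/
lemma cD_neg {a : ℝ} (ha0 : 0 < a) (ha1 : a ≤ 1 / 2) (n : ℕ) : cD a n < 0 := by
  have hp : 0 < poch a n := poch_pos ha0 n
  have hq : 0 < poch (1 - a) n := poch_pos (by linarith) n
  have hF : (0:ℝ) < (n.factorial : ℝ) := by positivity
  have h1a : (0:ℝ) < 1 - a := by linarith
  have hn0 : (0:ℝ) ≤ (n : ℝ) := Nat.cast_nonneg n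
  -- rewrite the three coefficients
  have hA1 : cA a (n + 1) =
      poch a n * (a + n) * (poch (1 - a) n * (1 - a + n)) / (((n:ℝ) + 1) * n.factorial) ^ 2 := by
    unfold cA
    rw [poch_succ, poch_succ, Nat.factorial_succ]
    push_cast
    ring
  have hB1 : cB a (n + 1) =
      (a - 1) * poch a n * (poch (1 - a) n * (1 - a + n)) / (((n:ℝ) + 1) * n.factorial) ^ 2 := by
    unfold cB
    rw [poch_succ_left, show a - 1 + 1 = a by ring, poch_succ, Nat.factorial_succ]
    push_cast
    ring
  have hA0 : cA a n = poch a n * poch (1 - a) n / (n.factorial : ℝ) ^ 2 := rfl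
  have key : (2 * a - 1) * ((a + n) * (1 - a + n) - ((n:ℝ) + 1) ^ 2)
      - 2 * (1 - a) ^ 2 * (1 - a + n) < 0 := by
    have expand : (2 * a - 1) * ((a + n) * (1 - a + n) - ((n:ℝ) + 1) ^ 2)
        - 2 * (1 - a) ^ 2 * (1 - a + n)
        = -((2 * a ^ 2 - 2 * a + 1) * ((n:ℝ) + 1) - a * (1 - a)) := by ring
    rw [expand]
    have h1 : (1:ℝ) / 2 ≤ 2 * a ^ 2 - 2 * a + 1 := by nlinarith
    have h2 : a * (1 - a) ≤ 1 / 4 := by nlinarith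
    nlinarith
  have hrepr : cD a n = poch a n * poch (1 - a) n *
      ((2 * a - 1) * ((a + n) * (1 - a + n) - ((n:ℝ) + 1) ^ 2)
        - 2 * (1 - a) ^ 2 * (1 - a + n)) /
      ((1 - a) * (((n:ℝ) + 1) * n.factorial) ^ 2) := by
    rw [show cD a n = (2 * a - 1) / (1 - a) * cA a (n + 1)
        - (2 * a - 1) / (1 - a) * cA a n + 2 * cB a (n + 1) from rfl, hA1, hB1, hA0]
    field_simp
    ring
  rw [hrepr]
  apply div_neg_of_neg_of_pos
  · exact mul_neg_of_pos_of_neg (by positivity) key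
  · positivity

/-- The series representation of `f₁`. -/
lemma f1_eq {a : ℝ} (ha0 : 0 < a) (ha1 : a ≤ 1 / 2) {r : ℝ} (hr0 : 0 < r) (hr1 : r < 1) :
    (2 * a - 1) / (1 - a) * (1 - r ^ 2) * Ka a r + 2 * Ea a r
      = (π / 2) * (((2 * a - 1) / (1 - a)) * cA a 0 + 2 * cB a 0
          + ∑' n : ℕ, cD a n * r ^ (2 * (n + 1))) := by
  have hra : |r| < 1 := by rw [abs_of_pos hr0]; exact hr1
  set c : ℝ := (2 * a - 1) / (1 - a) with hc
  have sA : Summable (fun n => cA a n * r ^ (2 * n)) :=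
    summable_aux hra (abs_cA_le_one ha0 ha1)
  have sB : Summable (fun n => cB a n * r ^ (2 * n)) :=
    summable_aux hra (abs_cB_le_one ha0 ha1)
  have sA' : Summable (fun n => cA a (n + 1) * r ^ (2 * (n + 1))) :=
    (summable_nat_add_iff (f := fun n => cA a n * r ^ (2 * n)) 1).2 sA
  have sB' : Summable (fun n => cB a (n + 1) * r ^ (2 * (n + 1))) :=
    (summable_nat_add_iff (f := fun n => cB a n * r ^ (2 * n)) 1).2 sB
  have sAr : Summable (fun n => c * cA a n * r ^ (2 * (n + 1))) := by
    have he : (fun n => c * cA a n * r ^ (2 * (n + 1)))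
        = fun n => (c * r ^ 2) * (cA a n * r ^ (2 * n)) := by
      funext n; rw [show 2 * (n + 1) = 2 * n + 2 by ring, pow_add]; ring
    rw [he]; exact sA.mul_left _
  have sCsum : Summable (fun n => (c * cA a n + 2 * cB a n) * r ^ (2 * n)) :=
    ((sA.mul_left c).add (sB.mul_left 2)).congr (by intro n; ring)
  have sC' : Summable (fun n => (c * cA a (n + 1) + 2 * cB a (n + 1)) * r ^ (2 * (n + 1))) :=
    (summable_nat_add_iff (f := fun n => (c * cA a n + 2 * cB a n) * r ^ (2 * n)) 1).2 sCsum
  set S : ℝ := ∑' n : ℕ, cA a n * r ^ (2 * n) with hS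
  set T : ℝ := ∑' n : ℕ, cB a n * r ^ (2 * n) with hT
  have hU : ∑' n : ℕ, (c * cA a n + 2 * cB a n) * r ^ (2 * n) = c * S + 2 * T := by
    rw [hS, hT, ← tsum_mul_left, ← tsum_mul_left,
      ← Summable.tsum_add (sA.mul_left c) (sB.mul_left 2)]
    congr 1; funext n; ring
  have hV : ∑' n : ℕ, c * cA a n * r ^ (2 * (n + 1)) = c * r ^ 2 * S := by
    rw [hS, ← tsum_mul_left]
    congr 1; funext n; rw [show 2 * (n + 1) = 2 * n + 2 by ring, pow_add]; ring
  have hU0 : ∑' n : ℕ, (c * cA a n + 2 * cB a n) * r ^ (2 * n)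
      = (c * cA a 0 + 2 * cB a 0)
        + ∑' n : ℕ, (c * cA a (n + 1) + 2 * cB a (n + 1)) * r ^ (2 * (n + 1)) := by
    simpa using Summable.tsum_eq_zero_add sCsum
  have hD : ∑' n : ℕ, (c * cA a (n + 1) + 2 * cB a (n + 1)) * r ^ (2 * (n + 1))
      - ∑' n : ℕ, c * cA a n * r ^ (2 * (n + 1))
      = ∑' n : ℕ, cD a n * r ^ (2 * (n + 1)) := by
    rw [← Summable.tsum_sub sC' sAr]
    congr 1; funext n
    unfold cD
    rw [← hc]
    ring
  have hKa : Ka a r = (π / 2) * S := rfl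
  have hEa : Ea a r = (π / 2) * T := rfl
  calc c * (1 - r ^ 2) * Ka a r + 2 * Ea a r
      = (π / 2) * ((c * S + 2 * T) - c * r ^ 2 * S) := by rw [hKa, hEa]; ring
    _ = (π / 2) * ((∑' n : ℕ, (c * cA a n + 2 * cB a n) * r ^ (2 * n))
          - ∑' n : ℕ, c * cA a n * r ^ (2 * (n + 1))) := by rw [hU, hV]
    _ = (π / 2) * ((c * cA a 0 + 2 * cB a 0)
          + ((∑' n : ℕ, (c * cA a (n + 1) + 2 * cB a (n + 1)) * r ^ (2 * (n + 1)))
            - ∑' n : ℕ, c * cA a n * r ^ (2 * (n + 1)))) := by rw [hU0]; ring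
    _ = (π / 2) * (c * cA a 0 + 2 * cB a 0 + ∑' n : ℕ, cD a n * r ^ (2 * (n + 1))) := by
        rw [hD]

end F1Aux

open F1Aux in
theorem f1_strictAnti (a : ℝ) (ha : a ∈ Set.Ioc (0:ℝ) (1/2)) :
    StrictAntiOn (fun r : ℝ => ((2*a - 1)/(1 - a)) * (1 - r^2) * Ka a r + 2 * Ea a r)
      (Set.Ioo 0 1) := by
  obtain ⟨ha0, ha1⟩ := ha
  intro r hr s hs hrs
  obtain ⟨hr0, hr1⟩ := hr
  obtain ⟨hs0, hs1⟩ := hs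
  simp only
  rw [f1_eq ha0 ha1 hr0 hr1, f1_eq ha0 ha1 hs0 hs1]
  have hπ : (0:ℝ) < π / 2 := by positivity
  apply mul_lt_mul_of_pos_left _ hπ
  apply (add_lt_add_iff_left _).2
  -- strict comparison of the two tails
  have hra : |r| < 1 := by rw [abs_of_pos hr0]; exact hr1
  have hsa : |s| < 1 := by rw [abs_of_pos hs0]; exact hs1
  have sumD : ∀ {t : ℝ}, 0 < t → t < 1 → Summable (fun n => cD a n * t ^ (2 * (n + 1))) := by
    intro t ht0 ht1
    have hta : |t| < 1 := by rw [abs_of_pos ht0]; exact ht1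
    have sA : Summable (fun n => cA a n * t ^ (2 * n)) :=
      summable_aux hta (abs_cA_le_one ha0 ha1)
    have sB : Summable (fun n => cB a n * t ^ (2 * n)) :=
      summable_aux hta (abs_cB_le_one ha0 ha1)
    have sA' : Summable (fun n => cA a (n + 1) * t ^ (2 * (n + 1))) :=
      (summable_nat_add_iff (f := fun n => cA a n * t ^ (2 * n)) 1).2 sA
    have sB' : Summable (fun n => cB a (n + 1) * t ^ (2 * (n + 1))) :=
      (summable_nat_add_iff (f := fun n => cB a n * t ^ (2 * n)) 1).2 sB
    have sAr : Summable (fun n => cA a n * t ^ (2 * (n + 1))) := by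
      have : (fun n => cA a n * t ^ (2 * (n + 1)))
          = fun n => (t ^ 2) * (cA a n * t ^ (2 * n)) := by
        funext n; rw [show 2 * (n + 1) = 2 * n + 2 by ring, pow_add]; ring
      rw [this]; exact sA.mul_left _
    have : (fun n => cD a n * t ^ (2 * (n + 1)))
        = fun n => (2 * a - 1) / (1 - a) * (cA a (n + 1) * t ^ (2 * (n + 1)))
          - (2 * a - 1) / (1 - a) * (cA a n * t ^ (2 * (n + 1)))
          + 2 * (cB a (n + 1) * t ^ (2 * (n + 1))) := by
      funext n; unfold cD; ring
    rw [this]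
    exact ((sA'.mul_left _).sub (sAr.mul_left _)).add (sB'.mul_left 2)
  apply Summable.tsum_lt_tsum (f := fun n => cD a n * s ^ (2 * (n + 1)))
    (g := fun n => cD a n * r ^ (2 * (n + 1))) (i := 0)
  · intro n
    have hD := cD_neg ha0 ha1 n
    have hpow : r ^ (2 * (n + 1)) < s ^ (2 * (n + 1)) :=
      pow_lt_pow_left₀ hrs hr0.le (by positivity)
    exact mul_le_mul_of_nonpos_left hpow.le hD.le
  · have hD := cD_neg ha0 ha1 0
    have hpow : r ^ (2 * (0 + 1)) < s ^ (2 * (0 + 1)) :=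
      pow_lt_pow_left₀ hrs hr0.le (by norm_num)
    exact mul_lt_mul_of_neg_left hpow hD
  · exact sumD hs0 hs1
  · exact sumD hr0 hr1
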